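/- arXiv:1604.07182 — 2 statements merged into one kernel-verified Lean document; each statement's English description precedes it below -/
import Mathlib

section
/- Let X_1,...,X_n be independent Bernoulli random variables, X = ∑ X_i and μ = E[X]. Then Pr[X ≤ μ/2] ≤ (e/2)^{-μ/2} ≤ e^{-μ/8}. -/
open MeasureTheory ProbabilityTheory Real

/-- Chernoff lower-tail bound: for independent Bernoulli random variables
`X 1, ..., X n` with `X = ∑ X i` and `μ = E[X]`, we have
`Pr[X ≤ μ/2] ≤ (e/2)^{-μ/2} ≤ e^{-μ/8}`. -/
theorem chernoff_lower_tail {Ω : Type*} [MeasureSpace Ω]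
    [IsProbabilityMeasure (ℙ : Measure Ω)]
    (n : ℕ) (X : Fin n → Ω → ℝ)
    (hmeas : ∀ i, Measurable (X i))
    (hindep : iIndepFun X ℙ)
    (hBern : ∀ i ω, X i ω = 0 ∨ X i ω = 1)
    (μ : ℝ) (hμ : μ = ∫ ω, (∑ i, X i ω) ∂ℙ) :
    ℙ {ω | ∑ i, X i ω ≤ μ / 2} ≤ ENNReal.ofReal ((Real.exp 1 / 2) ^ (-μ / 2)) ∧
      (Real.exp 1 / 2) ^ (-μ / 2) ≤ Real.exp (-μ / 8) := by
  set t : ℝ := -Real.log 2 with ht_def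
  have ht_neg : t ≤ 0 := neg_nonpos.mpr (Real.log_nonneg one_le_two)
  have hexp_t : Real.exp t = 1 / 2 := by
    rw [ht_def, Real.exp_neg, Real.exp_log two_pos]; norm_num
  -- each X i is integrable
  have hint : ∀ i, Integrable (X i) ℙ := by
    intro i
    refine Integrable.mono' (integrable_const 1) (hmeas i).aestronglyMeasurable
      (ae_of_all _ fun ω => ?_)
    rcases hBern i ω with h | h <;> simp [h]
  -- pointwise: exp (t * X i ω) = 1 - X i ω / 2
  have hexp_eq : ∀ i ω, Real.exp (t * X i ω) = 1 - X i ω / 2 := by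
    intro i ω
    rcases hBern i ω with h | h
    · simp [h]
    · simp [h, hexp_t]; norm_num
  have hint_exp : ∀ i, Integrable (fun ω => Real.exp (t * X i ω)) ℙ := by
    intro i
    simp_rw [hexp_eq]
    exact (integrable_const 1).sub ((hint i).div_const 2)
  set p : Fin n → ℝ := fun i => ∫ ω, X i ω ∂ℙ with hp
  have hp_nonneg : ∀ i, 0 ≤ p i := fun i =>
    integral_nonneg fun ω => by rcases hBern i ω with h | h <;> simp [h]
  have hμ_sum : μ = ∑ i, p i := by
    rw [hμ, integral_finset_sum _ fun i _ => hint i]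
  have hμ_nonneg : 0 ≤ μ := hμ_sum ▸ Finset.sum_nonneg fun i _ => hp_nonneg i
  -- mgf of each X i
  have hmgf : ∀ i, mgf (X i) ℙ t = 1 - p i / 2 := by
    intro i
    rw [mgf]
    simp_rw [hexp_eq]
    rw [integral_sub (integrable_const 1) ((hint i).div_const 2),
      integral_const, integral_div]
    simp [hp]
  have hmgf_le : ∀ i, mgf (X i) ℙ t ≤ Real.exp (-p i / 2) := by
    intro i
    rw [hmgf i]
    have := Real.add_one_le_exp (-p i / 2)
    linarith
  -- mgf of the sum
  have hmgf_sum : mgf (∑ i, X i) ℙ t ≤ Real.exp (-μ / 2) := by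
    rw [hindep.mgf_sum hmeas]
    calc ∏ i, mgf (X i) ℙ t ≤ ∏ i, Real.exp (-p i / 2) :=
          Finset.prod_le_prod (fun i _ => mgf_nonneg) (fun i _ => hmgf_le i)
      _ = Real.exp (∑ i, (-p i / 2)) := by rw [Real.exp_sum]
      _ = Real.exp (-μ / 2) := by
          congr 1
          rw [hμ_sum, ← Finset.sum_div, ← Finset.sum_neg_distrib]
  have hint_sum : Integrable (fun ω => Real.exp (t * (∑ i, X i) ω)) ℙ :=
    hindep.integrable_exp_mul_sum hmeas fun i _ => hint_exp i
  have hchernoff := measure_le_le_exp_mul_mgf (μ := ℙ) (X := ∑ i, X i) (μ / 2) ht_neg hint_sum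
  -- the rpow value
  have hval : (Real.exp 1 / 2) ^ (-μ / 2) = Real.exp (-μ / 2 * (1 - Real.log 2)) := by
    rw [Real.rpow_def_of_pos (by positivity), Real.log_div (Real.exp_ne_zero 1) two_ne_zero,
      Real.log_exp, mul_comm]
  have hbound : Real.exp (-t * (μ / 2)) * mgf (∑ i, X i) ℙ t ≤
      (Real.exp 1 / 2) ^ (-μ / 2) := by
    rw [hval]
    calc Real.exp (-t * (μ / 2)) * mgf (∑ i, X i) ℙ t
        ≤ Real.exp (-t * (μ / 2)) * Real.exp (-μ / 2) := by
          exact mul_le_mul_of_nonneg_left hmgf_sum (Real.exp_pos _).le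
      _ = Real.exp (-t * (μ / 2) + -μ / 2) := (Real.exp_add _ _).symm
      _ = Real.exp (-μ / 2 * (1 - Real.log 2)) := by rw [ht_def]; ring_nf
  have hset : {ω | ∑ i, X i ω ≤ μ / 2} = {ω | (∑ i, X i) ω ≤ μ / 2} := by
    ext ω; simp [Finset.sum_apply]
  constructor
  · rw [hset]
    have h1 : (ℙ {ω | (∑ i, X i) ω ≤ μ / 2}).toReal ≤ (Real.exp 1 / 2) ^ (-μ / 2) :=
      hchernoff.trans hbound
    calc ℙ {ω | (∑ i, X i) ω ≤ μ / 2}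
        = ENNReal.ofReal (ℙ {ω | (∑ i, X i) ω ≤ μ / 2}).toReal := by
          rw [ENNReal.ofReal_toReal (measure_ne_top _ _)]
      _ ≤ ENNReal.ofReal ((Real.exp 1 / 2) ^ (-μ / 2)) := ENNReal.ofReal_le_ofReal h1
  · rw [hval, Real.exp_le_exp]
    have hlog : Real.log 2 < 0.6931471808 := Real.log_two_lt_d9
    nlinarith
end

section
/- Consider a round in which a dominator v receives a message with probability at most P in each of Γ = γ₁·ln n independent rounds, where P < ω₁/(4γ₁) for constants ω₁, γ₁ > 0 with ω₁ ≥ 36. Then the probability that v receives at least ω₁·ln n messages over the Γ rounds is at most e^{-(ω₁/12) ln n} ≤ n^{-3}. -/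
open MeasureTheory ProbabilityTheory Real

/-- First part of Lemma 8 (CSA termination): over `Γ ≤ γ₁·ln n` independent
rounds, each delivering a message with probability at most `P < ω₁/(4γ₁)`, the
probability of receiving at least `ω₁·ln n` messages is at most
`e^{-(ω₁/12)·ln n} ≤ n^{-3}`. -/
theorem csa_few_messages {Ω : Type*} [MeasureSpace Ω]
    [IsProbabilityMeasure (ℙ : Measure Ω)]
    (n : ℕ) (hn : 2 ≤ n) (ω₁ γ₁ P : ℝ) (hω₁ : 36 ≤ ω₁) (hγ₁ : 0 < γ₁)
    (hP0 : 0 ≤ P) (hP : P < ω₁ / (4 * γ₁))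
    (Γ : ℕ) (hΓ : (Γ : ℝ) ≤ γ₁ * Real.log n)
    (A : Fin Γ → Set Ω) (hmeas : ∀ i, MeasurableSet (A i))
    (hindep : iIndepSet A ℙ)
    (hprob : ∀ i, ℙ (A i) ≤ ENNReal.ofReal P) :
    ℙ {ω | ω₁ * Real.log n ≤ ∑ i, (A i).indicator (fun _ => (1 : ℝ)) ω} ≤
      ENNReal.ofReal (Real.exp (-(ω₁ / 12) * Real.log n)) ∧
    Real.exp (-(ω₁ / 12) * Real.log n) ≤ (n : ℝ) ^ (-3 : ℝ) := by
  have hlogn : 0 < Real.log n := by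
    apply Real.log_pos
    exact_mod_cast hn
  constructor
  · -- Chernoff bound
    set X : Fin Γ → Ω → ℝ := fun i => (A i).indicator (fun _ => (1 : ℝ)) with hX
    have hXmeas : ∀ i, Measurable (X i) := fun i =>
      measurable_const.indicator (hmeas i)
    have hXindep : iIndepFun X ℙ :=
      hindep.iIndepFun_indicator
    -- pointwise identity for exp(1 * X i)
    have hpt : ∀ i, (fun ω => Real.exp (1 * X i ω)) =
        fun ω => (A i).indicator (fun _ => Real.exp 1 - 1) ω + 1 := by
      intro i
      funext ω
      by_cases h : ω ∈ A i <;>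
        simp [hX, Set.indicator_of_mem, Set.indicator_of_notMem, h]
    have hint : ∀ i, Integrable (fun ω => Real.exp (1 * X i ω)) ℙ := by
      intro i
      rw [hpt i]
      exact ((integrable_const _).indicator (hmeas i)).add (integrable_const 1)
    -- compute mgf of each X i at t = 1
    have hPi : ∀ i, (ℙ (A i)).toReal ≤ P := fun i =>
      ENNReal.toReal_le_of_le_ofReal hP0 (hprob i)
    have hmgf : ∀ i, mgf (X i) ℙ 1 ≤ Real.exp ((Real.exp 1 - 1) * P) := by
      intro i
      have hcomp : mgf (X i) ℙ 1 = (ℙ (A i)).toReal * (Real.exp 1 - 1) + 1 := by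
        rw [mgf, hpt i, integral_add (((integrable_const _).indicator (hmeas i)))
          (integrable_const 1), MeasureTheory.integral_indicator_const _ (hmeas i)]
        simp [measureReal_def]
      rw [hcomp]
      have h1 : (ℙ (A i)).toReal * (Real.exp 1 - 1) + 1 ≤ (Real.exp 1 - 1) * P + 1 := by
        have he : (0:ℝ) ≤ Real.exp 1 - 1 := by
          nlinarith [Real.exp_one_gt_d9]
        nlinarith [hPi i]
      exact h1.trans (by linarith [Real.add_one_le_exp ((Real.exp 1 - 1) * P)])
    -- Chernoff
    have hsum_int : Integrable (fun ω => Real.exp (1 * (∑ i, X i) ω)) ℙ :=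
      hXindep.integrable_exp_mul_sum hXmeas fun i _ => hint i
    have hcher := measure_ge_le_exp_mul_mgf (X := ∑ i, X i) (μ := ℙ)
      (ω₁ * Real.log n) zero_le_one hsum_int
    rw [hXindep.mgf_sum hXmeas] at hcher
    simp only [Finset.sum_apply] at hcher
    have hprod : ∏ i : Fin Γ, mgf (X i) ℙ 1 ≤ Real.exp ((Γ : ℝ) * ((Real.exp 1 - 1) * P)) := by
      calc ∏ i : Fin Γ, mgf (X i) ℙ 1
          ≤ ∏ i : Fin Γ, Real.exp ((Real.exp 1 - 1) * P) := by
            apply Finset.prod_le_prod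
            · intro i _; exact mgf_nonneg
            · intro i _; exact hmgf i
        _ = Real.exp ((Γ : ℝ) * ((Real.exp 1 - 1) * P)) := by
            rw [Finset.prod_const, ← Real.exp_nat_mul]
            simp
    have hΓP : (Γ : ℝ) * P ≤ ω₁ / 4 * Real.log n := by
      rcases eq_or_lt_of_le hP0 with h0 | h0
      · rw [← h0, mul_zero]; positivity
      · have h1 : (Γ : ℝ) * P ≤ γ₁ * Real.log n * P := by
          apply mul_le_mul_of_nonneg_right hΓ hP0
        have h2 : γ₁ * Real.log n * P ≤ γ₁ * Real.log n * (ω₁ / (4 * γ₁)) := by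
          apply mul_le_mul_of_nonneg_left hP.le
          positivity
        have h3 : γ₁ * Real.log n * (ω₁ / (4 * γ₁)) = ω₁ / 4 * Real.log n := by
          field_simp
        linarith
    have hexp_lt : Real.exp 1 < 2.7182818286 := Real.exp_one_lt_d9
    have hkey : Real.exp (-1 * (ω₁ * Real.log n)) *
        Real.exp ((Γ : ℝ) * ((Real.exp 1 - 1) * P)) ≤
        Real.exp (-(ω₁ / 12) * Real.log n) := by
      rw [← Real.exp_add, Real.exp_le_exp]
      have h4 : (Γ : ℝ) * ((Real.exp 1 - 1) * P) = (Real.exp 1 - 1) * ((Γ : ℝ) * P) := by ring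
      rw [h4]
      have h5 : (Real.exp 1 - 1) * ((Γ : ℝ) * P) ≤ (Real.exp 1 - 1) * (ω₁ / 4 * Real.log n) := by
        apply mul_le_mul_of_nonneg_left hΓP
        nlinarith [Real.exp_one_gt_d9]
      nlinarith [mul_pos (by linarith : (0:ℝ) < ω₁) hlogn]
    have hfinal : (ℙ {ω | ω₁ * Real.log n ≤ ∑ i, X i ω}).toReal ≤
        Real.exp (-(ω₁ / 12) * Real.log n) := by
      calc (ℙ {ω | ω₁ * Real.log n ≤ ∑ i, X i ω}).toReal
          ≤ Real.exp (-1 * (ω₁ * Real.log n)) * ∏ i : Fin Γ, mgf (X i) ℙ 1 := hcher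
        _ ≤ Real.exp (-1 * (ω₁ * Real.log n)) *
            Real.exp ((Γ : ℝ) * ((Real.exp 1 - 1) * P)) := by
            apply mul_le_mul_of_nonneg_left hprod (Real.exp_nonneg _)
        _ ≤ Real.exp (-(ω₁ / 12) * Real.log n) := hkey
    have hne : ℙ {ω | ω₁ * Real.log n ≤ ∑ i, X i ω} ≠ ⊤ := measure_ne_top _ _
    have : ℙ {ω | ω₁ * Real.log n ≤ ∑ i, X i ω} =
        ENNReal.ofReal (ℙ {ω | ω₁ * Real.log n ≤ ∑ i, X i ω}).toReal :=
      (ENNReal.ofReal_toReal hne).symm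
    calc ℙ {ω | ω₁ * Real.log n ≤ ∑ i, (A i).indicator (fun _ => (1:ℝ)) ω}
        = ℙ {ω | ω₁ * Real.log n ≤ ∑ i, X i ω} := rfl
      _ = ENNReal.ofReal (ℙ {ω | ω₁ * Real.log n ≤ ∑ i, X i ω}).toReal := this
      _ ≤ ENNReal.ofReal (Real.exp (-(ω₁ / 12) * Real.log n)) :=
          ENNReal.ofReal_le_ofReal hfinal
  · -- e^{-(ω₁/12) ln n} ≤ n^{-3}
    have hnpos : (0:ℝ) < n := by positivity
    rw [Real.rpow_def_of_pos hnpos, Real.exp_le_exp]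
    nlinarith
end
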